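/- Let X_0 = Σ_{i=1}^n s_i ∂/∂s_i be the Euler vector field on ℝⁿ, and for λ ∈ ℂ let L^λ_X = Σ_i X^i ∂/∂x_i + λ Div(X) be the Lie derivative of degree λ. Under the change of variables from stereographic coordinates (s_1,…,s_n) to spherical coordinates (θ_1,…,θ_n), given by s_n = sin θ_1 ⋯ sin θ_n/(1 − cos θ_n) and s_{n−i} = cos θ_i sin θ_{i+1} ⋯ sin θ_n/(1 − cos θ_n) for 1 ≤ i ≤ n−1, the vector field X_0 transforms into −sin θ_n ∂/∂θ_n, and consequently L^λ_{X_0} = −sin θ_n ∂/∂θ_n − λ cos θ_n. -/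

import Mathlib

open Real Set Finset

private lemma helperA (s c : ℝ) (h : s*s + c*c = 1) (hd : 1 - c ≠ 0) :
    (c*(1-c) - s*(0 - -s))/(1-c)^2 * (-s) = s/(1-c) := by
  field_simp
  linear_combination s * h

private lemma hsinFD (n : ℕ) (i : Fin n) (θ : Fin n → ℝ) :
    HasFDerivAt (fun x : Fin n → ℝ => Real.sin (x i))
      (Real.cos (θ i) • (ContinuousLinearMap.proj i : (Fin n → ℝ) →L[ℝ] ℝ)) θ := by
  have h : HasFDerivAt (fun x : Fin n → ℝ => x i)
      (ContinuousLinearMap.proj i : (Fin n → ℝ) →L[ℝ] ℝ) θ :=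
    (ContinuousLinearMap.proj i : (Fin n → ℝ) →L[ℝ] ℝ).hasFDerivAt
  exact (Real.hasDerivAt_sin (θ i)).comp_hasFDerivAt θ h

private lemma hcosFD (n : ℕ) (i : Fin n) (θ : Fin n → ℝ) :
    HasFDerivAt (fun x : Fin n → ℝ => Real.cos (x i))
      ((-Real.sin (θ i)) • (ContinuousLinearMap.proj i : (Fin n → ℝ) →L[ℝ] ℝ)) θ := by
  have h : HasFDerivAt (fun x : Fin n → ℝ => x i)
      (ContinuousLinearMap.proj i : (Fin n → ℝ) →L[ℝ] ℝ) θ :=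
    (ContinuousLinearMap.proj i : (Fin n → ℝ) →L[ℝ] ℝ).hasFDerivAt
  exact (Real.hasDerivAt_cos (θ i)).comp_hasFDerivAt θ h

private lemma hqFD (n : ℕ) (L : Fin n) (θ : Fin n → ℝ) (h : 1 - Real.cos (θ L) ≠ 0) :
    HasFDerivAt (fun x : Fin n → ℝ => Real.sin (x L) / (1 - Real.cos (x L)))
      (((Real.cos (θ L) * (1 - Real.cos (θ L)) - Real.sin (θ L) * (0 - -Real.sin (θ L))) /
        (1 - Real.cos (θ L)) ^ 2) • (ContinuousLinearMap.proj L : (Fin n → ℝ) →L[ℝ] ℝ)) θ := by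
  have h1 : HasFDerivAt (fun x : Fin n → ℝ => x L)
      (ContinuousLinearMap.proj L : (Fin n → ℝ) →L[ℝ] ℝ) θ :=
    (ContinuousLinearMap.proj L : (Fin n → ℝ) →L[ℝ] ℝ).hasFDerivAt
  have hphi : HasDerivAt (fun t => Real.sin t / (1 - Real.cos t))
      ((Real.cos (θ L) * (1 - Real.cos (θ L)) - Real.sin (θ L) * (0 - -Real.sin (θ L))) /
        (1 - Real.cos (θ L)) ^ 2) (θ L) :=
    (Real.hasDerivAt_sin (θ L)).div ((hasDerivAt_const (θ L) 1).sub (Real.hasDerivAt_cos (θ L))) h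
  exact hphi.comp_hasFDerivAt θ h1

variable (m : ℕ)

/-- The change of variables from spherical coordinates `(θ₁,…,θₙ)` to
stereographic coordinates `(s₁,…,sₙ)`, `n = m+1` (0-based indices):
`sₙ = sin θ₁ ⋯ sin θₙ/(1 − cos θₙ)` and
`s_{n−i} = cos θᵢ sin θ_{i+1} ⋯ sin θₙ/(1 − cos θₙ)` for `1 ≤ i ≤ n−1`. -/
noncomputable def stereoOfSpherical (θ : Fin (m + 1) → ℝ) : Fin (m + 1) → ℝ :=
  fun k =>
    if k = Fin.last m then
      (∏ j, Real.sin (θ j)) / (1 - Real.cos (θ (Fin.last m)))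
    else
      (Real.cos (θ ⟨m - 1 - k.val, by omega⟩) *
          ∏ j ∈ Finset.univ.filter (fun j : Fin (m + 1) => m - 1 - k.val < j.val),
            Real.sin (θ j)) /
        (1 - Real.cos (θ (Fin.last m)))

/-- The vector field `−sin θₙ ∂/∂θₙ` in spherical coordinates. -/
noncomputable def Yfield (θ : Fin (m + 1) → ℝ) : Fin (m + 1) → ℝ :=
  fun i => if i = Fin.last m then -Real.sin (θ (Fin.last m)) else 0

/-- Partial derivative of a real-valued function. -/
noncomputable def pdR (i : Fin (m + 1)) (g : (Fin (m + 1) → ℝ) → ℝ)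
    (θ : Fin (m + 1) → ℝ) : ℝ := fderiv ℝ g θ (Pi.single i 1)

/-- Partial derivative of a complex-valued function. -/
noncomputable def pdC (i : Fin (m + 1)) (f : (Fin (m + 1) → ℝ) → ℂ)
    (θ : Fin (m + 1) → ℝ) : ℂ := fderiv ℝ f θ (Pi.single i 1)

private lemma mainComp (m : ℕ) (θ : Fin (m + 1) → ℝ)
    (hθ : ∀ i, θ i ∈ Ioo 0 π) :
    ∀ k, ∃ D : (Fin (m + 1) → ℝ) →L[ℝ] ℝ,
      HasFDerivAt (fun x => stereoOfSpherical m x k) D θ ∧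
      D ((-Real.sin (θ (Fin.last m))) • (Pi.single (Fin.last m) 1 : Fin (m + 1) → ℝ))
        = stereoOfSpherical m θ k := by
  set L := Fin.last m with hL
  have hs : 0 < Real.sin (θ L) := Real.sin_pos_of_pos_of_lt_pi (hθ L).1 (hθ L).2
  have hc1 : Real.cos (θ L) < 1 := by
    nlinarith [Real.sin_sq_add_cos_sq (θ L), Real.cos_le_one (θ L)]
  have hden : 1 - Real.cos (θ L) ≠ 0 := by linarith
  intro k
  by_cases hk : k = L
  · subst hk
    have hfun : (fun x => stereoOfSpherical m x L) =
        fun x : Fin (m+1) → ℝ => (∏ j ∈ Finset.univ.erase L, Real.sin (x j)) *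
          (Real.sin (x L) / (1 - Real.cos (x L))) := by
      funext x
      simp only [stereoOfSpherical, ← hL]
      simp only [if_true]
      rw [← Finset.prod_erase_mul Finset.univ _ (Finset.mem_univ L)]
      ring
    have hP : HasFDerivAt (fun x : Fin (m+1) → ℝ => ∏ j ∈ Finset.univ.erase L, Real.sin (x j))
        (∑ j ∈ Finset.univ.erase L,
          (∏ l ∈ (Finset.univ.erase L).erase j, Real.sin (θ l)) •
            (Real.cos (θ j) • (ContinuousLinearMap.proj j : (Fin (m+1) → ℝ) →L[ℝ] ℝ))) θ :=
      HasFDerivAt.finset_prod (fun j _ => hsinFD (m+1) j θ)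
    have hq := hqFD (m+1) L θ hden
    have hg := hP.mul hq
    rw [hfun]
    refine ⟨_, hg, ?_⟩
    have hsingle : ∀ j ∈ Finset.univ.erase L,
        (Pi.single L 1 : Fin (m+1) → ℝ) j = 0 := fun j hj =>
      Pi.single_eq_of_ne (Finset.ne_of_mem_erase hj) 1
    simp only [ContinuousLinearMap.add_apply, ContinuousLinearMap.smul_apply,
      ContinuousLinearMap.sum_apply, ContinuousLinearMap.proj_apply, Pi.smul_apply,
      smul_eq_mul, Pi.single_eq_same]
    rw [Finset.sum_eq_zero (fun j hj => by rw [hsingle j hj]; ring)]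
    have hval := congrFun hfun θ
    rw [hval]
    rw [mul_zero, add_zero, mul_one,
      helperA (Real.sin (θ L)) (Real.cos (θ L))
        (by rw [← sq, ← sq]; exact Real.sin_sq_add_cos_sq _) hden]
  · have hm : (k : ℕ) < m := by
      have h1 := k.isLt
      have h2 : (k : ℕ) ≠ m := fun h => hk (Fin.ext (by simp [hL, Fin.last, h]))
      omega
    have hmk : m - 1 - (k : ℕ) < m + 1 := by omega
    set i0 : Fin (m+1) := ⟨m - 1 - (k : ℕ), hmk⟩ with hi0
    set s : Finset (Fin (m+1)) :=
      Finset.univ.filter (fun j : Fin (m+1) => m - 1 - (k : ℕ) < j.val) with hs'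
    have hLs : L ∈ s := by
      simp only [hs', Finset.mem_filter, Finset.mem_univ, true_and, hL, Fin.val_last]
      omega
    have hi0L : i0 ≠ L := by
      simp only [hi0, hL, Fin.ext_iff, Fin.val_last, ne_eq]
      omega
    have hfun : (fun x => stereoOfSpherical m x k) =
        fun x : Fin (m+1) → ℝ => (Real.cos (x i0) * ∏ j ∈ s.erase L, Real.sin (x j)) *
          (Real.sin (x L) / (1 - Real.cos (x L))) := by
      funext x
      simp only [stereoOfSpherical, ← hL, if_neg hk]
      rw [← Finset.prod_erase_mul s _ hLs]
      ring
    have hP : HasFDerivAt (fun x : Fin (m+1) → ℝ => ∏ j ∈ s.erase L, Real.sin (x j))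
        (∑ j ∈ s.erase L,
          (∏ l ∈ (s.erase L).erase j, Real.sin (θ l)) •
            (Real.cos (θ j) • (ContinuousLinearMap.proj j : (Fin (m+1) → ℝ) →L[ℝ] ℝ))) θ :=
      HasFDerivAt.finset_prod (fun j _ => hsinFD (m+1) j θ)
    have hH := (hcosFD (m+1) i0 θ).mul hP
    have hq := hqFD (m+1) L θ hden
    have hg := hH.mul hq
    rw [hfun]
    refine ⟨_, hg, ?_⟩
    have hsingle : ∀ j ∈ s.erase L,
        (Pi.single L 1 : Fin (m+1) → ℝ) j = 0 := fun j hj =>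
      Pi.single_eq_of_ne (Finset.ne_of_mem_erase hj) 1
    have hval := congrFun hfun θ
    simp only [ContinuousLinearMap.add_apply, ContinuousLinearMap.smul_apply,
      ContinuousLinearMap.sum_apply, ContinuousLinearMap.proj_apply, Pi.smul_apply,
      smul_eq_mul, Pi.single_eq_same, Pi.single_eq_of_ne hi0L]
    rw [Finset.sum_eq_zero (fun j hj => by rw [hsingle j hj]; ring)]
    rw [hval]
    simp only [mul_zero, add_zero, zero_add, mul_one]
    rw [helperA (Real.sin (θ L)) (Real.cos (θ L))
        (by rw [← sq, ← sq]; exact Real.sin_sq_add_cos_sq _) hden]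
    rfl


variable (m : ℕ)


/-- Under the change from stereographic to spherical coordinates, the Euler field
`X₀ = ∑ sᵢ ∂/∂sᵢ` transforms into `−sin θₙ ∂/∂θₙ` (the pushforward of
`−sin θₙ ∂/∂θₙ` by the coordinate map is the Euler field, i.e. the identity map
in the `s`-coordinates), and consequently the Lie derivative of degree `λ`
satisfies `L^λ_{X₀} = −sin θₙ ∂/∂θₙ − λ cos θₙ`. -/
theorem euler_field_spherical (lam : ℂ) (θ : Fin (m + 1) → ℝ)
    (hθ : ∀ i, θ i ∈ Ioo 0 π)
    (hΦ : DifferentiableAt ℝ (stereoOfSpherical m) θ) :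
    (fderiv ℝ (stereoOfSpherical m) θ
        ((-Real.sin (θ (Fin.last m))) • (Pi.single (Fin.last m) 1 : Fin (m + 1) → ℝ))
      = stereoOfSpherical m θ) ∧
    (∀ f : (Fin (m + 1) → ℝ) → ℂ, DifferentiableAt ℝ f θ →
      (∑ i, (Yfield m θ i : ℂ) * pdC m i f θ)
          + lam * (∑ i, (pdR m i (fun x => Yfield m x i) θ : ℂ)) * f θ
        = -(Real.sin (θ (Fin.last m)) : ℂ) * pdC m (Fin.last m) f θ
            - lam * (Real.cos (θ (Fin.last m)) : ℂ) * f θ) := by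
  classical
  set L := Fin.last m with hL
  have main := mainComp m θ hθ
  have hdiffc : ∀ k, DifferentiableAt ℝ (fun x => stereoOfSpherical m x k) θ :=
    fun k => ((main k).choose_spec.1).differentiableAt
  constructor
  · have h1 : fderiv ℝ (stereoOfSpherical m) θ =
        ContinuousLinearMap.pi (fun i => fderiv ℝ (fun x => stereoOfSpherical m x i) θ) :=
      fderiv_pi hdiffc
    funext k
    rw [h1, ContinuousLinearMap.pi_apply, ((main k).choose_spec.1).fderiv]
    exact (main k).choose_spec.2
  · intro f hf
    have hY : ∀ i : Fin (m+1), i ≠ L → (Yfield m θ i : ℂ) = 0 := by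
      intro i hi
      simp [Yfield, if_neg hi, ← hL]
    have hsum1 : (∑ i, (Yfield m θ i : ℂ) * pdC m i f θ)
        = (-(Real.sin (θ L)) : ℝ) * pdC m L f θ := by
      rw [Finset.sum_eq_single L (fun i _ hi => by rw [hY i hi, zero_mul])
        (fun h => absurd (Finset.mem_univ L) h)]
      norm_num [Yfield, ← hL]
    have hsum2 : (∑ i, (pdR m i (fun x => Yfield m x i) θ : ℂ))
        = ((-Real.cos (θ L) : ℝ) : ℂ) := by
      rw [Finset.sum_eq_single L ?side (fun h => absurd (Finset.mem_univ L) h)]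
      · have hfun : (fun x => Yfield m x L) = fun x : Fin (m+1) → ℝ => -Real.sin (x L) := by
          funext x
          simp [Yfield, ← hL]
        have hder : HasFDerivAt (fun x : Fin (m+1) → ℝ => -Real.sin (x L))
            (-(Real.cos (θ L) • (ContinuousLinearMap.proj L : (Fin (m+1) → ℝ) →L[ℝ] ℝ))) θ :=
          (hsinFD (m+1) L θ).neg
        rw [pdR, hfun, hder.fderiv]
        norm_num
      · intro i _ hi
        have hfun : (fun x => Yfield m x i) = fun _ : Fin (m+1) → ℝ => (0:ℝ) := by
          funext x
          simp [Yfield, if_neg hi, ← hL]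
        rw [pdR, hfun, fderiv_fun_const]
        norm_num
    rw [hsum1, hsum2]
    push_cast
    ring
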